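/- For the scalar ODE ẋ = −κ₁|x|^{γ₁} sgn(x) − κ₂|x|^{γ₂} sgn(x) with κ₁, κ₂ > 0, 0 < γ₁ < 1 < γ₂, the settling time satisfies, for all initial states x₀, T(x₀) ≤ 1/(κ₁(1−γ₁)) + 1/(κ₂(γ₂−1)); in particular the origin is fixed-time stable. -/

import Mathlib

/-- Signed power `|y|^γ sgn(y)` appearing in the attracting laws. -/
noncomputable def spow (y γ : ℝ) : ℝ := |y| ^ γ * Real.sign y

lemma spow_neg' (y γ : ℝ) : spow (-y) γ = -spow y γ := by
  unfold spow; rw [abs_neg, Real.sign_neg]; ring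

lemma spow_of_pos {y : ℝ} (hy : 0 < y) (γ : ℝ) : spow y γ = y ^ γ := by
  unfold spow; rw [abs_of_pos hy, Real.sign_of_pos hy, mul_one]

lemma key_lemma (κ₁ κ₂ γ₁ γ₂ : ℝ)
    (hκ₁ : 0 < κ₁) (hκ₂ : 0 < κ₂)
    (hγ₁0 : 0 < γ₁) (hγ₁1 : γ₁ < 1) (hγ₂ : 1 < γ₂)
    (x : ℝ → ℝ) (hx0 : 0 < x 0)
    (hode : ∀ t, 0 ≤ t →
      HasDerivAt x (-κ₁ * spow (x t) γ₁ - κ₂ * spow (x t) γ₂) t) :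
    ∃ t, 0 ≤ t ∧ t ≤ 1 / (κ₁ * (1 - γ₁)) + 1 / (κ₂ * (γ₂ - 1)) ∧ x t = 0 := by
  set c₁ : ℝ := κ₁ * (1 - γ₁) with hc₁def
  set c₂ : ℝ := κ₂ * (γ₂ - 1) with hc₂def
  have hc₁ : 0 < c₁ := mul_pos hκ₁ (by linarith)
  have hc₂ : 0 < c₂ := mul_pos hκ₂ (by linarith)
  set T : ℝ := 1 / c₁ + 1 / c₂ with hTdef
  set t₂ : ℝ := 1 / c₂ with ht₂def
  have ht₂pos : 0 < t₂ := by positivity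
  have ht₂T : t₂ ≤ T := by
    have : 0 < 1 / c₁ := by positivity
    simp only [hTdef]; linarith
  have hTpos : 0 < T := lt_of_lt_of_le ht₂pos ht₂T
  by_contra hcon
  push_neg at hcon
  have h0 : ∀ t, 0 ≤ t → t ≤ T → x t ≠ 0 := fun t h1 h2 => hcon t h1 h2
  -- x is positive on [0, T]
  have hpos : ∀ t ∈ Set.Icc (0:ℝ) T, 0 < x t := by
    intro t ht
    rcases lt_trichotomy (x t) 0 with hlt | heq | hgt
    · exfalso
      have hcontt : ContinuousOn x (Set.Icc 0 t) := fun s hs =>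
        (hode s hs.1).continuousAt.continuousWithinAt
      have := intermediate_value_Icc' ht.1 hcontt
      have h0mem : (0:ℝ) ∈ Set.Icc (x t) (x 0) := ⟨le_of_lt hlt, le_of_lt hx0⟩
      obtain ⟨s, hs, hxs⟩ := this h0mem
      exact h0 s hs.1 (le_trans hs.2 ht.2) hxs
    · exact absurd heq (h0 t ht.1 ht.2)
    · exact hgt
  have hcont : ContinuousOn x (Set.Icc 0 T) := fun s hs =>
    (hode s hs.1).continuousAt.continuousWithinAt
  -- rewritten ODE on [0,T]
  have hode' : ∀ t ∈ Set.Icc (0:ℝ) T,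
      HasDerivAt x (-κ₁ * (x t) ^ γ₁ - κ₂ * (x t) ^ γ₂) t := by
    intro t ht
    have := hode t ht.1
    rwa [spow_of_pos (hpos t ht), spow_of_pos (hpos t ht)] at this
  have hintsub : interior (Set.Icc (0:ℝ) T) ⊆ Set.Icc 0 T := interior_subset
  -- Step A : monotonicity of g t = x t ^ (1 - γ₂) - c₂ * t
  have hgmono : MonotoneOn (fun t => x t ^ (1 - γ₂) - c₂ * t) (Set.Icc 0 T) := by
    apply monotoneOn_of_hasDerivWithinAt_nonneg (convex_Icc 0 T)
      (f' := fun t => (-κ₁ * (x t) ^ γ₁ - κ₂ * (x t) ^ γ₂) * (1 - γ₂) * (x t) ^ (1 - γ₂ - 1) - c₂)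
    · exact (hcont.rpow_const fun s hs => Or.inl (ne_of_gt (hpos s hs))).sub
        (continuousOn_const.mul continuousOn_id)
    · intro t ht
      have ht' := hintsub ht
      have hlin : HasDerivAt (fun y : ℝ => c₂ * y) c₂ t := by
        simpa using (hasDerivAt_id t).const_mul c₂
      exact (((hode' t ht').rpow_const (Or.inl (ne_of_gt (hpos t ht')))).sub
        hlin).hasDerivWithinAt
    · intro t ht
      have ht' := hintsub ht
      have hu : 0 < x t := hpos t ht'
      have hA : 0 ≤ (x t) ^ γ₁ := Real.rpow_nonneg hu.le γ₁
      have hB : 0 < (x t) ^ γ₂ := Real.rpow_pos_of_pos hu γ₂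
      have hC : 0 < (x t) ^ (1 - γ₂ - 1) := Real.rpow_pos_of_pos hu _
      have hBC : (x t) ^ γ₂ * (x t) ^ (1 - γ₂ - 1) = 1 := by
        rw [← Real.rpow_add hu]; norm_num
      simp only [hc₂def]
      nlinarith [mul_nonneg (mul_nonneg hκ₁.le hA) hC.le]
  -- Step B : antitonicity of k t = x t ^ (1 - γ₁) + c₁ * t
  have hkanti : AntitoneOn (fun t => x t ^ (1 - γ₁) + c₁ * t) (Set.Icc 0 T) := by
    apply antitoneOn_of_hasDerivWithinAt_nonpos (convex_Icc 0 T)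
      (f' := fun t => (-κ₁ * (x t) ^ γ₁ - κ₂ * (x t) ^ γ₂) * (1 - γ₁) * (x t) ^ (1 - γ₁ - 1) + c₁)
    · exact (hcont.rpow_const fun s hs => Or.inl (ne_of_gt (hpos s hs))).add
        (continuousOn_const.mul continuousOn_id)
    · intro t ht
      have ht' := hintsub ht
      have hlin : HasDerivAt (fun y : ℝ => c₁ * y) c₁ t := by
        simpa using (hasDerivAt_id t).const_mul c₁
      exact (((hode' t ht').rpow_const (Or.inl (ne_of_gt (hpos t ht')))).add
        hlin).hasDerivWithinAt
    · intro t ht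
      have ht' := hintsub ht
      have hu : 0 < x t := hpos t ht'
      have hA : 0 < (x t) ^ γ₁ := Real.rpow_pos_of_pos hu γ₁
      have hB : 0 ≤ (x t) ^ γ₂ := Real.rpow_nonneg hu.le γ₂
      have hD : 0 < (x t) ^ (1 - γ₁ - 1) := Real.rpow_pos_of_pos hu _
      have hAD : (x t) ^ γ₁ * (x t) ^ (1 - γ₁ - 1) = 1 := by
        rw [← Real.rpow_add hu]; norm_num
      simp only [hc₁def]
      nlinarith [mul_nonneg (mul_nonneg hκ₂.le hB) hD.le]
  -- from Step A: x t₂ < 1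
  have h0mem : (0:ℝ) ∈ Set.Icc (0:ℝ) T := ⟨le_refl 0, hTpos.le⟩
  have ht₂mem : t₂ ∈ Set.Icc (0:ℝ) T := ⟨ht₂pos.le, ht₂T⟩
  have hTmem : T ∈ Set.Icc (0:ℝ) T := ⟨hTpos.le, le_refl T⟩
  have hstepA := hgmono h0mem ht₂mem ht₂pos.le
  have hx00 : 0 < (x 0) ^ (1 - γ₂) := Real.rpow_pos_of_pos hx0 _
  have hc₂t₂ : c₂ * t₂ = 1 := by rw [ht₂def]; field_simp [hc₂.ne']
  have hgt1 : 1 < (x t₂) ^ (1 - γ₂) := by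
    simp only at hstepA
    nlinarith
  have hxt₂pos : 0 < x t₂ := hpos t₂ ht₂mem
  have hxt₂lt1 : x t₂ < 1 := by
    rcases (Real.one_lt_rpow_iff_of_pos hxt₂pos).mp hgt1 with ⟨_, h⟩ | ⟨h, _⟩
    · linarith
    · exact h
  -- from Step B: contradiction
  have hstepB := hkanti ht₂mem hTmem ht₂T
  have hc₁T : c₁ * (T - t₂) = 1 := by
    have : T - t₂ = 1 / c₁ := by simp [hTdef, ht₂def]
    rw [this]; field_simp
  have hlt1 : (x t₂) ^ (1 - γ₁) < 1 :=
    Real.rpow_lt_one hxt₂pos.le hxt₂lt1 (by linarith)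
  have hxT : 0 < (x T) ^ (1 - γ₁) := Real.rpow_pos_of_pos (hpos T hTmem) _
  simp only at hstepB
  nlinarith

theorem stmt_9 (κ₁ κ₂ γ₁ γ₂ : ℝ)
    (hκ₁ : 0 < κ₁) (hκ₂ : 0 < κ₂)
    (hγ₁0 : 0 < γ₁) (hγ₁1 : γ₁ < 1) (hγ₂ : 1 < γ₂)
    (x : ℝ → ℝ) (x₀ : ℝ) (hx0 : x 0 = x₀)
    (hode : ∀ t, 0 ≤ t →
      HasDerivAt x (-κ₁ * spow (x t) γ₁ - κ₂ * spow (x t) γ₂) t) :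
    (∃ t, 0 ≤ t ∧ x t = 0) ∧
    sInf {t : ℝ | 0 ≤ t ∧ x t = 0} ≤
      1 / (κ₁ * (1 - γ₁)) + 1 / (κ₂ * (γ₂ - 1)) := by
  set T : ℝ := 1 / (κ₁ * (1 - γ₁)) + 1 / (κ₂ * (γ₂ - 1)) with hT
  have hTpos : 0 ≤ T := by
    have h1 : 0 < κ₁ * (1 - γ₁) := mul_pos hκ₁ (by linarith)
    have h2 : 0 < κ₂ * (γ₂ - 1) := mul_pos hκ₂ (by linarith)
    positivity
  have hbdd : BddBelow {t : ℝ | 0 ≤ t ∧ x t = 0} := ⟨0, fun t ht => ht.1⟩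
  have main : ∃ t, 0 ≤ t ∧ t ≤ T ∧ x t = 0 := by
    rcases lt_trichotomy x₀ 0 with hneg | hzero | hposi
    · obtain ⟨t, h1, h2, h3⟩ := key_lemma κ₁ κ₂ γ₁ γ₂ hκ₁ hκ₂ hγ₁0 hγ₁1 hγ₂
        (fun t => -(x t)) (by show (0:ℝ) < -(x 0); rw [hx0]; linarith)
        (fun t ht => by
          have := (hode t ht).fun_neg
          refine this.congr_deriv ?_; symm
          show -κ₁ * spow (-(x t)) γ₁ - κ₂ * spow (-(x t)) γ₂ = _
          rw [spow_neg', spow_neg']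
          ring)
      exact ⟨t, h1, h2, neg_eq_zero.mp h3⟩
    · exact ⟨0, le_refl 0, hTpos, hx0.trans hzero⟩
    · obtain ⟨t, h1, h2, h3⟩ := key_lemma κ₁ κ₂ γ₁ γ₂ hκ₁ hκ₂ hγ₁0 hγ₁1 hγ₂
        x (by rw [hx0]; exact hposi) hode
      exact ⟨t, h1, h2, h3⟩
  obtain ⟨t, h1, h2, h3⟩ := main
  refine ⟨⟨t, h1, h3⟩, le_trans (csInf_le hbdd ⟨h1, h3⟩) h2⟩
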